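/- Let F ⊆ ℝ^A, suppose there exists a subset T ⊆ A such that x(T) = 1 for all x ∈ F, and let B ∪ {b} ⊆ F be a linear basis of lin(F) where B is an integral basis for lin(B), and there is a subset C ⊆ A with x(C) = 1 for all x ∈ B and b(C) = 2. Then B ∪ {b} is an integral basis for lin(F): every integral vector f ∈ lin(F) ∩ ℤ^A is an integral linear combination of B ∪ {b}. -/

import Mathlib

open scoped Classical

noncomputable section

theorem stmt19 {A : Type*} [Fintype A]
    (F : Set (A → ℝ)) (T : Finset A)
    (hT : ∀ x ∈ F, ∑ a ∈ T, x a = 1)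
    (B : Finset (A → ℝ)) (b : A → ℝ)
    (hBF : ↑B ⊆ F) (hbF : b ∈ F) (hbB : b ∉ B)
    -- all vectors of `B ∪ {b}` are integral
    (hint : ∀ x ∈ insert b B, ∃ xz : A → ℤ, x = fun a => ((xz a : ℝ)))
    -- `B ∪ {b}` is a linear basis of `lin(F)`
    (hli : LinearIndependent ℝ (fun v : {v // v ∈ insert b B} => (v : A → ℝ)))
    (hspan : Submodule.span ℝ (↑(insert b B) : Set (A → ℝ)) = Submodule.span ℝ F)
    -- `B` is an integral basis for `lin(B)`
    (hBint : ∀ f : A → ℤ,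
      (fun a => (f a : ℝ)) ∈ Submodule.span ℝ (↑B : Set (A → ℝ)) →
      ∃ c : (A → ℝ) → ℤ, (fun a => (f a : ℝ)) = ∑ v ∈ B, (c v : ℝ) • v)
    (C : Finset A)
    (hC : ∀ x ∈ B, ∑ a ∈ C, x a = 1) (hbC : ∑ a ∈ C, b a = 2) :
    -- then `B ∪ {b}` is an integral basis for `lin(F)`
    ∀ f : A → ℤ, (fun a => (f a : ℝ)) ∈ Submodule.span ℝ F →
      ∃ c : (A → ℝ) → ℤ, (fun a => (f a : ℝ)) = ∑ v ∈ insert b B, (c v : ℝ) • v := by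
  intro f hf
  rw [← hspan] at hf
  obtain ⟨g, -, hg⟩ := Submodule.mem_span_finset.mp hf
  -- sum of f over a set S in terms of basis sums
  have hsum : ∀ S : Finset A, ∑ a ∈ S, (f a : ℝ)
      = ∑ v ∈ insert b B, g v * ∑ a ∈ S, v a := by
    intro S
    have : ∀ a, (f a : ℝ) = ∑ v ∈ insert b B, g v * v a := by
      intro a
      have := congrFun hg a
      simpa [Finset.sum_apply] using this.symm
    simp only [this, Finset.mul_sum]
    rw [Finset.sum_comm]
  have hCsum : ∑ a ∈ C, (f a : ℝ) = g b * 2 + ∑ z ∈ B, g z := by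
    rw [hsum C, Finset.sum_insert hbB, hbC]
    congr 1
    refine Finset.sum_congr rfl fun z hz => ?_
    rw [hC z hz, mul_one]
  have hTsum : ∑ a ∈ T, (f a : ℝ) = g b + ∑ z ∈ B, g z := by
    rw [hsum T, Finset.sum_insert hbB, hT b hbF, mul_one]
    congr 1
    refine Finset.sum_congr rfl fun z hz => ?_
    rw [hT z (hBF hz), mul_one]
  set m : ℤ := (∑ a ∈ C, f a) - (∑ a ∈ T, f a) with hm
  have hgb : g b = (m : ℝ) := by
    push_cast [hm]
    linarith [hCsum, hTsum]
  obtain ⟨bz, hbz⟩ := hint b (Finset.mem_insert_self b B)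
  set f' : A → ℤ := fun a => f a - m * bz a with hf'
  have hfval : (fun a => (f' a : ℝ)) = (fun a => (f a : ℝ)) - (m : ℝ) • b := by
    funext a
    simp [hf', hbz]
  have hrest : (fun a => (f a : ℝ)) - (m : ℝ) • b = ∑ v ∈ B, g v • v := by
    rw [← hg, Finset.sum_insert hbB, hgb]
    abel
  have hmem : (fun a => (f' a : ℝ)) ∈ Submodule.span ℝ (↑B : Set (A → ℝ)) := by
    rw [hfval, hrest]
    exact Submodule.sum_smul_mem _ _ fun v hv => Submodule.subset_span hv
  obtain ⟨c, hc⟩ := hBint f' hmem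
  refine ⟨fun v => if v = b then m else c v, ?_⟩
  have h2 : ∀ v ∈ B, (((fun v => if v = b then m else c v) v : ℤ) : ℝ) • v = (c v : ℝ) • v := by
    intro v hv
    have hne : v ≠ b := fun h => hbB (h ▸ hv)
    simp [hne]
  rw [Finset.sum_insert hbB, Finset.sum_congr rfl h2, ← hc, hfval]
  simp only [eq_self_iff_true, if_true]
  abel
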